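/- Let g₁, g₂ be unit quaternions (‖g₁‖ = ‖g₂‖ = 1) and let a be a nonzero quaternion with re(a) = 0 and imI(a) = 0. If the conjugates g₁·a·g₁⁻¹ and g₂·a·g₂⁻¹ commute, i.e. (g₁ a g₁⁻¹)(g₂ a g₂⁻¹) = (g₂ a g₂⁻¹)(g₁ a g₁⁻¹), then the quaternion q = g₁⁻¹·g₂ satisfies re(q) = 0 or imI(q) = 0. -/

import Mathlib

set_option maxHeartbeats 1000000


open scoped Quaternion

open Quaternion in
/-- Key computation of Proposition 5.1: if g₁, g₂ are unit quaternions, a is a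
nonzero pure quaternion orthogonal to i, and the conjugates g₁ a g₁⁻¹ and
g₂ a g₂⁻¹ commute, then q = g₁⁻¹ g₂ is orthogonal to 1 or orthogonal to i. -/
theorem stmt7 (g₁ g₂ a : ℍ[ℝ]) (hg₁ : ‖g₁‖ = 1) (hg₂ : ‖g₂‖ = 1)
    (ha : a ≠ 0) (hre : a.re = 0) (himI : a.imI = 0)
    (hcomm : (g₁ * a * g₁⁻¹) * (g₂ * a * g₂⁻¹) = (g₂ * a * g₂⁻¹) * (g₁ * a * g₁⁻¹)) :
    (g₁⁻¹ * g₂).re = 0 ∨ (g₁⁻¹ * g₂).imI = 0 := by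
  have hg₁0 : g₁ ≠ 0 := by rintro rfl; simp at hg₁
  have hg₂0 : g₂ ≠ 0 := by rintro rfl; simp at hg₂
  set q : ℍ[ℝ] := g₁⁻¹ * g₂ with hqdef
  have hq0 : q ≠ 0 := mul_ne_zero (inv_ne_zero hg₁0) hg₂0
  have hnq : normSq q = 1 := by
    have hn : ‖q‖ = 1 := by
      rw [hqdef, norm_mul, norm_inv, hg₁, hg₂]; norm_num
    rw [Quaternion.normSq_eq_norm_mul_self, hn]; norm_num
  have hqinv : q⁻¹ = star q := by
    rw [Quaternion.inv_def, hnq]; simp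
  have hsq : star q * q = (1 : ℍ[ℝ]) := by
    rw [Quaternion.star_mul_self, hnq]; simp
  have hqs : q * star q = (1 : ℍ[ℝ]) := by
    rw [Quaternion.self_mul_star, hnq]; simp
  -- the key commuting equation after conjugating by g₁⁻¹
  have hkey : a * (q * a * star q) = (q * a * star q) * a := by
    rw [← hqinv]
    have h1 : q * a * q⁻¹ = g₁⁻¹ * ((g₂ * a * g₂⁻¹) * g₁) := by
      rw [hqdef, mul_inv_rev, inv_inv]
      simp [mul_assoc]
    rw [h1]
    apply mul_left_cancel₀ hg₁0
    apply mul_right_cancel₀ (inv_ne_zero hg₁0)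
    calc g₁ * (a * (g₁⁻¹ * (g₂ * a * g₂⁻¹ * g₁))) * g₁⁻¹
        = (g₁ * a * g₁⁻¹) * (g₂ * a * g₂⁻¹) * (g₁ * g₁⁻¹) := by
          simp [mul_assoc]
      _ = (g₂ * a * g₂⁻¹) * (g₁ * a * g₁⁻¹) := by
          rw [hcomm, mul_inv_cancel₀ hg₁0, mul_one]
      _ = g₁ * (g₁⁻¹ * (g₂ * a * g₂⁻¹ * g₁) * a) * g₁⁻¹ := by
          simp [mul_assoc, mul_inv_cancel_left₀ hg₁0]
  -- coordinates
  set A : ℍ[ℝ] := q * a * star q with hAdef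
  set b := a.imJ with hb
  set c := a.imK with hc
  have hbc : b ^ 2 + c ^ 2 ≠ 0 := by
    intro h
    apply ha
    have hb0 : b = 0 := by nlinarith [sq_nonneg b, sq_nonneg c]
    have hc0 : c = 0 := by nlinarith [sq_nonneg b, sq_nonneg c]
    ext <;> simp [hre, himI, ← hb, ← hc, hb0, hc0]
  -- A is pure
  have hAre : A.re = 0 := by
    have : (q * (a * star q)).re = ((a * star q) * q).re := by
      simp [Quaternion.re_mul]; ring
    rw [hAdef, mul_assoc, this, mul_assoc, hsq, mul_one, hre]
  -- commutator component equations
  have e2 : c * A.imI = 0 := by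
    have := congrArg QuaternionAlgebra.imJ hkey
    simp only [Quaternion.imJ_mul, hre, himI, hAre, ← hb, ← hc] at this
    linarith
  have e3 : b * A.imI = 0 := by
    have := congrArg QuaternionAlgebra.imK hkey
    simp only [Quaternion.imK_mul, hre, himI, hAre, ← hb, ← hc] at this
    linarith
  have hA1 : A.imI = 0 := by
    rcases mul_eq_zero.1 e2 with h | h
    · rcases mul_eq_zero.1 e3 with h' | h'
      · exact absurd (by rw [h, h']; ring) hbc
      · exact h'
    · exact h
  have e1 : b * A.imK = c * A.imJ := by
    have := congrArg QuaternionAlgebra.imI hkey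
    simp only [Quaternion.imI_mul, hre, himI, hAre, hA1, ← hb, ← hc] at this
    linarith
  -- norm equation
  have hnA : A.imJ ^ 2 + A.imK ^ 2 = b ^ 2 + c ^ 2 := by
    have h1 : normSq A = normSq a := by
      rw [hAdef, map_mul, map_mul, Quaternion.normSq_star, hnq, one_mul,
        mul_one]
    rw [Quaternion.normSq_def', Quaternion.normSq_def'] at h1
    simp only [hAre, hA1, hre, himI] at h1
    ring_nf at h1 ⊢
    linarith
  -- (A.imJ, A.imK) = ±(b, c)
  have hsqeq : (A.imJ * b + A.imK * c) ^ 2 = (b ^ 2 + c ^ 2) ^ 2 := by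
    linear_combination (b ^ 2 + c ^ 2) * hnA + (c * A.imJ - b * A.imK) * e1
  have hpm : A.imJ * b + A.imK * c = b ^ 2 + c ^ 2 ∨
      A.imJ * b + A.imK * c = -(b ^ 2 + c ^ 2) := by
    have h0 : (A.imJ * b + A.imK * c - (b ^ 2 + c ^ 2)) *
        (A.imJ * b + A.imK * c + (b ^ 2 + c ^ 2)) = 0 := by
      linear_combination hsqeq
    rcases mul_eq_zero.1 h0 with h | h
    · left; linarith
    · right; linarith
  rcases hpm with hp | hm
  · -- A = a, so q commutes with a, hence imI q = 0
    right
    have hA2 : A.imJ = b := by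
      have : A.imJ * (b ^ 2 + c ^ 2) = b * (b ^ 2 + c ^ 2) := by
        linear_combination b * hp - c * e1
      exact mul_right_cancel₀ hbc this
    have hA3 : A.imK = c := by
      have : A.imK * (b ^ 2 + c ^ 2) = c * (b ^ 2 + c ^ 2) := by
        linear_combination c * hp + b * e1
      exact mul_right_cancel₀ hbc this
    have hAa : A = a := by
      ext
      · rw [hAre, hre]
      · rw [hA1, himI]
      · exact hA2
      · exact hA3
    have hcom : q * a = a * q := by
      have : q * a * star q * q = a * q := by rw [hAdef] at hAa; rw [hAa]
      rwa [mul_assoc, hsq, mul_one] at this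
    have j : (q * a).imJ = (a * q).imJ := by rw [hcom]
    have k : (q * a).imK = (a * q).imK := by rw [hcom]
    simp only [Quaternion.imJ_mul, Quaternion.imK_mul, hre, himI, ← hb, ← hc] at j k
    rcases mul_eq_zero.1 (show c * q.imI = 0 by linarith) with h | h
    · rcases mul_eq_zero.1 (show b * q.imI = 0 by linarith) with h' | h'
      · exact absurd (by rw [h, h']; ring) hbc
      · exact h'
    · exact h
  · -- A = -a, so q anticommutes with a, hence re q = 0
    left
    have hA2 : A.imJ = -b := by
      have : A.imJ * (b ^ 2 + c ^ 2) = -b * (b ^ 2 + c ^ 2) := by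
        linear_combination b * hm - c * e1
      exact mul_right_cancel₀ hbc this
    have hA3 : A.imK = -c := by
      have : A.imK * (b ^ 2 + c ^ 2) = -c * (b ^ 2 + c ^ 2) := by
        linear_combination c * hm + b * e1
      exact mul_right_cancel₀ hbc this
    have hAa : A = -a := by
      ext
      · rw [hAre]; simp [hre]
      · rw [hA1]; simp [himI]
      · simpa using hA2
      · simpa using hA3
    have hcom : q * a = -(a * q) := by
      have : q * a * star q * q = -a * q := by rw [hAdef] at hAa; rw [hAa]
      rw [mul_assoc, hsq, mul_one] at this
      rw [this, neg_mul]
    have j : (q * a).imJ = (-(a * q)).imJ := by rw [hcom]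
    have k : (q * a).imK = (-(a * q)).imK := by rw [hcom]
    simp only [Quaternion.imJ_mul, Quaternion.imK_mul, Quaternion.imJ_neg,
      Quaternion.imK_neg, hre, himI, ← hb, ← hc] at j k
    rcases mul_eq_zero.1 (show b * q.re = 0 by linarith) with h | h
    · rcases mul_eq_zero.1 (show c * q.re = 0 by linarith) with h' | h'
      · exact absurd (by rw [h, h']; ring) hbc
      · exact h'
    · exact h
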